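/- The function κ(x, ε) = (4ε² + 8x² + 4ε²·O + 4ε²x·O' + ε⁴·(O')²)/(ε² + 2x²), where O = O(x, ε) is real-analytic near the origin with O(0,0) = 0 and O' = ∂_x O, has limit 4 as (x, ε) → (0, 0) with (x, ε) ≠ (0, 0). -/

import Mathlib

open Filter Topology

/-- The function κ(x, ε) = (4ε² + 8x² + 4ε²·O + 4ε²x·O' + ε⁴·(O')²)/(ε² + 2x²), where O
is real-analytic near the origin with O(0,0) = 0 and O' = ∂ₓO, tends to 4 as
(x, ε) → (0,0), (x, ε) ≠ (0,0). -/
theorem kappa_limit_four (O : ℝ → ℝ → ℝ)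
    (hO : AnalyticAt ℝ (fun p : ℝ × ℝ => O p.1 p.2) (0, 0))
    (hO0 : O 0 0 = 0) :
    Tendsto (fun p : ℝ × ℝ =>
        (4 * p.2 ^ 2 + 8 * p.1 ^ 2 + 4 * p.2 ^ 2 * O p.1 p.2
          + 4 * p.2 ^ 2 * p.1 * deriv (fun s => O s p.2) p.1
          + p.2 ^ 4 * (deriv (fun s => O s p.2) p.1) ^ 2) / (p.2 ^ 2 + 2 * p.1 ^ 2))
      (nhdsWithin (0, 0) {(0, 0)}ᶜ) (nhds 4) := by
  set F : ℝ × ℝ → ℝ := fun p => O p.1 p.2 with hF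
  set g : ℝ × ℝ → ℝ := fun p => fderiv ℝ F p (1, 0) with hg
  -- eventually the partial derivative equals g
  have hgev : ∀ᶠ p in 𝓝 ((0:ℝ), (0:ℝ)), deriv (fun s => O s p.2) p.1 = g p := by
    filter_upwards [hO.eventually_analyticAt] with p hp
    have h1 : HasDerivAt (fun s : ℝ => (s, p.2)) ((1:ℝ), (0:ℝ)) p.1 :=
      HasDerivAt.prodMk (hasDerivAt_id p.1) (hasDerivAt_const p.1 p.2)
    have h2 : HasFDerivAt F (fderiv ℝ F p) (p.1, p.2) := by
      simpa using hp.differentiableAt.hasFDerivAt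
    have hd : HasDerivAt (fun s => O s p.2) (fderiv ℝ F p (1, 0)) p.1 :=
      HasFDerivAt.comp_hasDerivAt (l := F) p.1 h2 h1
    exact hd.deriv
  have hgc : ContinuousAt g (0, 0) := by
    have h1 : ContinuousAt (fderiv ℝ F) (0, 0) := hO.fderiv.continuousAt
    exact ((ContinuousLinearMap.apply ℝ ℝ ((1:ℝ),(0:ℝ))).continuous.continuousAt).comp h1
  -- h tends to 0
  have hh : Tendsto (fun p : ℝ × ℝ => 4 * O p.1 p.2 + 4 * p.1 * g p + p.2 ^ 2 * (g p) ^ 2)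
      (𝓝 ((0:ℝ), (0:ℝ))) (𝓝 0) := by
    have hOc : ContinuousAt F (0, 0) := hO.continuousAt
    have hc : ContinuousAt
        (fun p : ℝ × ℝ => 4 * F p + 4 * p.1 * g p + p.2 ^ 2 * (g p) ^ 2) (0, 0) := by
      exact ((continuousAt_const.mul hOc).add
        ((continuousAt_const.mul continuousAt_fst).mul hgc)).add
        ((continuousAt_snd.pow 2).mul (hgc.pow 2))
    have := hc.tendsto
    simpa [hF, hO0] using this
  -- the product r * h tends to 0 on the punctured neighborhood
  have hr0 : Tendsto (fun p : ℝ × ℝ => p.2 ^ 2 / (p.2 ^ 2 + 2 * p.1 ^ 2) *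
      (4 * O p.1 p.2 + 4 * p.1 * g p + p.2 ^ 2 * (g p) ^ 2))
      (𝓝[{((0:ℝ),(0:ℝ))}ᶜ] (0, 0)) (𝓝 0) := by
    apply squeeze_zero_norm'
      (a := fun p : ℝ × ℝ => |4 * O p.1 p.2 + 4 * p.1 * g p + p.2 ^ 2 * (g p) ^ 2|)
    · filter_upwards [self_mem_nhdsWithin] with p hp
      have hp' : p ≠ (0, 0) := hp
      have hden : 0 < p.2 ^ 2 + 2 * p.1 ^ 2 := by
        by_contra hle
        push_neg at hle
        have h1 : p.1 = 0 ∧ p.2 = 0 := by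
          constructor <;> nlinarith [sq_nonneg p.1, sq_nonneg p.2]
        exact hp' (Prod.ext h1.1 h1.2)
      have hr1 : p.2 ^ 2 / (p.2 ^ 2 + 2 * p.1 ^ 2) ≤ 1 := by
        rw [div_le_one hden]; nlinarith [sq_nonneg p.1]
      have hr2 : 0 ≤ p.2 ^ 2 / (p.2 ^ 2 + 2 * p.1 ^ 2) := by positivity
      rw [Real.norm_eq_abs, abs_mul, abs_of_nonneg hr2]
      exact mul_le_of_le_one_left (abs_nonneg _) hr1
    · have h2 := (hh.mono_left (nhdsWithin_le_nhds (s := {((0:ℝ),(0:ℝ))}ᶜ))).abs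
      simpa using h2
  have key : Tendsto (fun p : ℝ × ℝ => 4 + p.2 ^ 2 / (p.2 ^ 2 + 2 * p.1 ^ 2) *
      (4 * O p.1 p.2 + 4 * p.1 * g p + p.2 ^ 2 * (g p) ^ 2))
      (𝓝[{((0:ℝ),(0:ℝ))}ᶜ] (0, 0)) (𝓝 4) := by
    have := tendsto_const_nhds.add hr0 (α := ℝ × ℝ) (f := fun _ => (4:ℝ))
    simpa using this
  refine key.congr' ?_
  filter_upwards [self_mem_nhdsWithin, mem_nhdsWithin_of_mem_nhds hgev] with p hp hderiv
  have hp' : p ≠ (0, 0) := hp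
  have hden : p.2 ^ 2 + 2 * p.1 ^ 2 ≠ 0 := by
    intro h
    have h1 : p.1 = 0 ∧ p.2 = 0 := by
      constructor <;> nlinarith [sq_nonneg p.1, sq_nonneg p.2]
    exact hp' (Prod.ext h1.1 h1.2)
  rw [hderiv]
  field_simp
  ring
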